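/- Let X be a finite set with |X| = 3n and let F = {F_1, …, F_m} with m ≥ n be a family of 3-element subsets of X. Construct the weighted graph G'(X, F) as follows: for each a ∈ X an element vertex v(a) of weight 1; for each F_j a set vertex v(F_j) of weight 1; for each F_j and each a ∈ F_j an edge (v(F_j), v(a)) of weight m − n; and a start vertex v_s of weight 0 with an edge (v_s, v(F_j)) of weight 0 for every j. Then there exists a closed covering walk from v_s in G'(X, F) (a covering walk that returns to v_s at the end) with agent count exactly N = 3n + m if and only if F contains an exact 3-cover of X, i.e., a subfamily F_c ⊆ F with |F_c| = n whose members are pairwise disjoint and whose union is X. -/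

import Mathlib

/-! Strategic deployment: common definitions.

A walk is scanned with a state consisting of the set of already-visited
vertices, the number `curr` of currently available (non-settled) agents, and
the number `add` of additional agents (beyond `N = ∑ v, wV v`) recruited so
far.  Crossing an edge `e` requires `curr ≥ wE e` (topping up `add`
otherwise); the first visit of a vertex `v` settles `wV v` agents there. -/

namespace Deploy

structure St (V : Type*) (α : Type*) where
  visited : Finset V
  curr : α
  add : α

variable {V : Type*} [DecidableEq V] {α : Type*} [AddCommMonoid α] [LinearOrder α] [IsOrderedAddMonoid α] [Sub α]

/-- Scan step for crossing an edge `e`. -/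
def crossEdge (wE : Sym2 V → α) (e : Sym2 V) (s : St V α) : St V α :=
  if s.curr < wE e then ⟨s.visited, wE e, s.add + (wE e - s.curr)⟩ else s

/-- Scan step for visiting a vertex `v` (only first visits have an effect). -/
def visitVtx (wV : V → α) (v : V) (s : St V α) : St V α :=
  if v ∈ s.visited then s
  else if s.curr < wV v then ⟨insert v s.visited, 0, s.add + (wV v - s.curr)⟩
  else ⟨insert v s.visited, s.curr - wV v, s.add⟩

variable {G : SimpleGraph V}

/-- Scanning a walk: alternately cross the next edge and visit the next vertex. -/
def scanWalk (wE : Sym2 V → α) (wV : V → α) : {u t : V} → G.Walk u t → St V α → St V α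
  | _, _, .nil, s => s
  | u, _, .cons (v := v) _ p, s => scanWalk wE wV p (visitVtx wV v (crossEdge wE s(u, v) s))

/-- The agent count of a walk `p` starting at `vs`: the scan starts with
`curr = N = ∑ v, wV v` and `add = 0`, first visiting the start vertex; the
agent count is `N` plus the final value of `add`. -/
def agentCount [Fintype V] (wE : Sym2 V → α) (wV : V → α) {vs t : V} (p : G.Walk vs t) : α :=
  (∑ v, wV v) + (scanWalk wE wV p (visitVtx wV vs ⟨∅, ∑ v, wV v, 0⟩)).add

/-- A walk is covering if every vertex of the graph appears on it. -/
def IsCovering {vs t : V} (p : G.Walk vs t) : Prop := ∀ v : V, v ∈ p.support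

end Deploy

namespace Deploy

/-- Vertices of the graph `G'(X, F)` from the 3-Exact-Cover reduction (return
variant): an element vertex for each element of `X`, a set vertex for each of
the `m` three-element subsets, and a start vertex `v_s` (no dummy vertex). -/
inductive XCVtx' (A : Type*) (m : ℕ) where
  | elem : A → XCVtx' A m
  | setv : Fin m → XCVtx' A m
  | start : XCVtx' A m
deriving DecidableEq

instance (A : Type*) [Fintype A] (m : ℕ) : Fintype (XCVtx' A m) := by
  classical
  have e : XCVtx' A m ≃ (A ⊕ Fin m) ⊕ (Fin 1) :=
    { toFun := fun v => match v with
        | .elem a => Sum.inl (Sum.inl a)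
        | .setv j => Sum.inl (Sum.inr j)
        | .start => Sum.inr 0
      invFun := fun v => match v with
        | Sum.inl (Sum.inl a) => .elem a
        | Sum.inl (Sum.inr j) => .setv j
        | Sum.inr _ => .start
      left_inv := by rintro (a | j | _) <;> rfl
      right_inv := by rintro ((a | j) | ⟨(_ | k), hk⟩) <;> first | rfl | omega }
  exact Fintype.ofEquiv _ e.symm

/-- The graph `G'(X, F)`: the start vertex is joined to every set vertex, and
each set vertex `v(F_j)` is joined to the element vertices of the three
elements of `F_j`. -/
def xcGraph' {A : Type*} {m : ℕ} (F : Fin m → Finset A) : SimpleGraph (XCVtx' A m) :=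
  SimpleGraph.fromRel (fun u v =>
    match u, v with
    | .start, .setv _ => True
    | .setv j, .elem a => a ∈ F j
    | _, _ => False)

/-- Edge weights of `G'(X, F)`: edges between set vertices and element
vertices have weight `m - n`; all edges incident to the start vertex have
weight `0`. -/
def xcWE' (A : Type*) (n m : ℕ) : Sym2 (XCVtx' A m) → ℕ :=
  Sym2.lift ⟨fun u v =>
    match u, v with
    | .setv _, .elem _ => m - n
    | .elem _, .setv _ => m - n
    | _, _ => 0,
    by rintro (a | j | _) (b | k | _) <;> rfl⟩

/-- Vertex weights of `G'(X, F)`: the start vertex has weight `0`, every other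
vertex has weight `1`. -/
def xcWV' (A : Type*) (m : ℕ) : XCVtx' A m → ℕ
  | .start => 0
  | _ => 1

end Deploy

set_option linter.unusedSectionVars false
set_option maxHeartbeats 1000000

namespace Deploy

section Generic

variable {V : Type*} [DecidableEq V] {G : SimpleGraph V}
variable {wE : Sym2 V → ℕ} {wV : V → ℕ}

lemma crossEdge_of_le {e} {s : St V ℕ} (h : wE e ≤ s.curr) : crossEdge wE e s = s := by
  simp [crossEdge, Nat.not_lt.2 h]

lemma visitVtx_of_mem {v} {s : St V ℕ} (h : v ∈ s.visited) : visitVtx wV v s = s := by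
  simp [visitVtx, h]

lemma visitVtx_of_new {v} {s : St V ℕ} (h : v ∉ s.visited) (h2 : wV v ≤ s.curr) :
    visitVtx wV v s = ⟨insert v s.visited, s.curr - wV v, s.add⟩ := by
  simp [visitVtx, h, Nat.not_lt.2 h2]

lemma scanWalk_nil {u} (s : St V ℕ) : scanWalk (G := G) wE wV (.nil (u := u)) s = s := rfl

lemma scanWalk_cons {u v t} (h : G.Adj u v) (p : G.Walk v t) (s : St V ℕ) :
    scanWalk wE wV (.cons h p) s = scanWalk wE wV p (visitVtx wV v (crossEdge wE s(u, v) s)) := rfl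

lemma scanWalk_append {u v t} (p : G.Walk u v) (q : G.Walk v t) (s : St V ℕ) :
    scanWalk wE wV (p.append q) s = scanWalk wE wV q (scanWalk wE wV p s) := by
  induction p generalizing s with
  | nil => rfl
  | cons h p ih => simp [SimpleGraph.Walk.cons_append, scanWalk_cons, ih]

lemma add_le_crossEdge {e} (s : St V ℕ) : s.add ≤ (crossEdge wE e s).add := by
  unfold crossEdge; split <;> simp

lemma add_le_visitVtx {v} (s : St V ℕ) : s.add ≤ (visitVtx wV v s).add := by
  unfold visitVtx; split
  · rfl
  · split <;> simp

lemma add_le_scanWalk {u t} (p : G.Walk u t) (s : St V ℕ) :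
    s.add ≤ (scanWalk wE wV p s).add := by
  induction p generalizing s with
  | nil => rfl
  | cons h p ih =>
    rw [scanWalk_cons]
    exact le_trans (le_trans (add_le_crossEdge s) (add_le_visitVtx _)) (ih _)

lemma step_facts {u v} {s : St V ℕ} (h0 : s.add = 0)
    (h1 : (visitVtx wV v (crossEdge wE s(u, v) s)).add = 0) :
    wE s(u, v) ≤ s.curr ∧ (v ∉ s.visited → wV v ≤ s.curr) := by
  by_cases hc : s.curr < wE s(u, v)
  · exfalso
    have : (crossEdge wE s(u, v) s).add ≠ 0 := by
      simp [crossEdge, hc, h0]; omega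
    have := add_le_visitVtx (wV := wV) (v := v) (crossEdge wE s(u, v) s)
    omega
  · rw [crossEdge_of_le (Nat.not_lt.1 hc)] at h1
    refine ⟨Nat.not_lt.1 hc, fun hv => ?_⟩
    by_contra hw
    simp [visitVtx, hv, Nat.lt_of_not_le hw, h0] at h1
    omega

lemma visited_subset_crossEdge {e} (s : St V ℕ) : s.visited ⊆ (crossEdge wE e s).visited := by
  unfold crossEdge; split <;> simp

lemma visited_subset_visitVtx {v} (s : St V ℕ) : s.visited ⊆ (visitVtx wV v s).visited := by
  unfold visitVtx; split
  · rfl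
  · split <;> exact Finset.subset_insert _ _

lemma mem_visitVtx_self {v} (s : St V ℕ) : v ∈ (visitVtx wV v s).visited := by
  unfold visitVtx; split
  · assumption
  · split <;> exact Finset.mem_insert_self _ _

lemma visited_subset_scanWalk {u t} (p : G.Walk u t) (s : St V ℕ) :
    s.visited ⊆ (scanWalk wE wV p s).visited := by
  induction p generalizing s with
  | nil => rfl
  | cons h p ih =>
    rw [scanWalk_cons]
    exact (visited_subset_crossEdge s).trans ((visited_subset_visitVtx _).trans (ih _))

lemma support_mem_visited {u t v} (p : G.Walk u t) (s : St V ℕ) (hv : v ∈ p.support) :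
    v ∈ (scanWalk wE wV p s).visited ∨ v = u := by
  induction p generalizing s with
  | nil => right; simpa using hv
  | cons h p ih =>
    rw [SimpleGraph.Walk.support_cons] at hv
    rcases List.mem_cons.1 hv with rfl | hv
    · right; rfl
    · rcases ih _ hv with h' | rfl
      · left; rwa [scanWalk_cons]
      · left
        rw [scanWalk_cons]
        exact visited_subset_scanWalk _ _ (mem_visitVtx_self _)

end Generic

section XC

variable {A : Type*} [Fintype A] [DecidableEq A] {n m : ℕ} {F : Fin m → Finset A}

lemma xc_adj_start_setv (j : Fin m) : (xcGraph' F).Adj .start (.setv j) := by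
  rw [xcGraph', SimpleGraph.fromRel_adj]
  exact ⟨by simp, Or.inl trivial⟩

lemma xc_adj_setv_elem {j : Fin m} {a : A} (h : a ∈ F j) :
    (xcGraph' F).Adj (.setv j) (.elem a) := by
  rw [xcGraph', SimpleGraph.fromRel_adj]
  exact ⟨by simp, Or.inl h⟩

lemma xc_adj_elem {w : XCVtx' A m} {a : A} (h : (xcGraph' F).Adj w (.elem a)) :
    ∃ j, w = .setv j ∧ a ∈ F j := by
  rw [xcGraph', SimpleGraph.fromRel_adj] at h
  rcases w with b | j | _
  · simp_all
  · exact ⟨j, rfl, by rcases h with ⟨-, h | h⟩ <;> simp_all⟩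
  · simp_all

lemma xcWE'_start_setv (j : Fin m) : xcWE' A n m s(XCVtx'.start, XCVtx'.setv j) = 0 := rfl
lemma xcWE'_setv_start (j : Fin m) : xcWE' A n m s(XCVtx'.setv j, XCVtx'.start) = 0 := rfl
lemma xcWE'_setv_elem (j : Fin m) (a : A) :
    xcWE' A n m s(XCVtx'.setv j, XCVtx'.elem a) = m - n := rfl
lemma xcWE'_elem_setv (j : Fin m) (a : A) :
    xcWE' A n m s(XCVtx'.elem a, XCVtx'.setv j) = m - n := rfl

lemma xcWV'_start : xcWV' A m .start = 0 := rfl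
lemma xcWV'_elem (a : A) : xcWV' A m (.elem a) = 1 := rfl
lemma xcWV'_setv (j : Fin m) : xcWV' A m (.setv j) = 1 := rfl

lemma card_XCVtx' : Fintype.card (XCVtx' A m) = Fintype.card A + m + 1 := by
  have e : XCVtx' A m ≃ (A ⊕ Fin m) ⊕ (Fin 1) :=
    { toFun := fun v => match v with
        | .elem a => Sum.inl (Sum.inl a)
        | .setv j => Sum.inl (Sum.inr j)
        | .start => Sum.inr 0
      invFun := fun v => match v with
        | Sum.inl (Sum.inl a) => .elem a
        | Sum.inl (Sum.inr j) => .setv j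
        | Sum.inr _ => .start
      left_inv := by rintro (a | j | _) <;> rfl
      right_inv := by rintro ((a | j) | ⟨(_ | k), hk⟩) <;> first | rfl | omega }
  rw [Fintype.card_congr e]
  simp

lemma sum_xcWV' : ∑ v, xcWV' A m v = Fintype.card A + m := by
  have hs : (XCVtx'.start : XCVtx' A m) ∈ Finset.univ := Finset.mem_univ _
  rw [← Finset.sum_erase_add _ _ hs, xcWV'_start,
    Finset.sum_congr rfl (fun v hv => ?_), Finset.sum_const, smul_eq_mul, mul_one,
    Finset.card_erase_of_mem hs, Finset.card_univ, card_XCVtx']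
  · omega
  · rcases v with a | j | _
    · rfl
    · rfl
    · exact absurd rfl (Finset.ne_of_mem_erase hv)


lemma elem_injective : Function.Injective (XCVtx'.elem : A → XCVtx' A m) :=
  fun _ _ h => by simpa using h

lemma setv_injective : Function.Injective (XCVtx'.setv : Fin m → XCVtx' A m) :=
  fun _ _ h => by simpa using h

/-- Extraction of a small cover from a state right before a heavy crossing. -/
lemma xc_extract (hA : Fintype.card A = 3 * n) (hnm : n ≤ m) {s : St (XCVtx' A m) ℕ}
    (hcurr : m - n ≤ s.curr)
    (hinv : s.curr + (s.visited.erase .start).card = 3 * n + m)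
    (hall : ∀ a : A, XCVtx'.elem a ∈ s.visited)
    (hW : ∀ a : A, XCVtx'.elem a ∈ s.visited → ∃ j, a ∈ F j ∧ XCVtx'.setv j ∈ s.visited) :
    ∃ Fc : Finset (Fin m), Fc.card ≤ n ∧ ∀ a : A, ∃ j ∈ Fc, a ∈ F j := by
  classical
  set Fc := Finset.univ.filter (fun j => XCVtx'.setv j ∈ s.visited) with hFc
  refine ⟨Fc, ?_, fun a => ?_⟩
  · set E := (Finset.univ : Finset A).image (XCVtx'.elem : A → XCVtx' A m) with hE
    set S := Fc.image (XCVtx'.setv : Fin m → XCVtx' A m) with hS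
    have hsub : E ∪ S ⊆ s.visited.erase .start := by
      intro v hv
      rcases Finset.mem_union.1 hv with hv | hv
      · obtain ⟨a, -, rfl⟩ := Finset.mem_image.1 hv
        exact Finset.mem_erase.2 ⟨by simp, hall a⟩
      · obtain ⟨j, hj, rfl⟩ := Finset.mem_image.1 hv
        exact Finset.mem_erase.2 ⟨by simp, (Finset.mem_filter.1 hj).2⟩
    have hdisj : Disjoint E S := by
      rw [Finset.disjoint_left]
      rintro v hv hv'
      obtain ⟨a, -, rfl⟩ := Finset.mem_image.1 hv
      obtain ⟨j, -, h⟩ := Finset.mem_image.1 hv'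
      exact absurd h (by simp)
    have hcardE : E.card = 3 * n := by
      rw [hE, Finset.card_image_of_injective _ elem_injective, Finset.card_univ, hA]
    have hcardS : S.card = Fc.card :=
      Finset.card_image_of_injective _ setv_injective
    have h1 := Finset.card_le_card hsub
    rw [Finset.card_union_of_disjoint hdisj, hcardE, hcardS] at h1
    omega
  · obtain ⟨j, hj, hjv⟩ := hW a (hall a)
    exact ⟨j, Finset.mem_filter.2 ⟨Finset.mem_univ _, hjv⟩, hj⟩

/-- Counting: a cover by at most `n` three-element sets of a `3n`-element set
is exact. -/
lemma xc_count (hA : Fintype.card A = 3 * n) (hF : ∀ j, (F j).card = 3)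
    {Fc : Finset (Fin m)} (hle : Fc.card ≤ n) (hcov : ∀ a : A, ∃ j ∈ Fc, a ∈ F j) :
    Fc.card = n ∧ (∀ i ∈ Fc, ∀ j ∈ Fc, i ≠ j → Disjoint (F i) (F j)) := by
  classical
  have hun : (Finset.univ : Finset A) ⊆ Fc.biUnion F := fun a _ => by
    obtain ⟨j, hj, ha⟩ := hcov a
    exact Finset.mem_biUnion.2 ⟨j, hj, ha⟩
  have hbig : 3 * n ≤ 3 * Fc.card := by
    have h1 := Finset.card_le_card hun
    have h2 := Finset.card_biUnion_le (s := Fc) (t := F)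
    have h3 : ∑ j ∈ Fc, (F j).card = 3 * Fc.card := by
      rw [Finset.sum_congr rfl (fun j _ => hF j), Finset.sum_const, smul_eq_mul, mul_comm]
    rw [Finset.card_univ, hA] at h1
    omega
  have hcard : Fc.card = n := by omega
  refine ⟨hcard, fun i hi j hj hij => ?_⟩
  rw [Finset.disjoint_left]
  intro x hxi hxj
  by_contra
  have hsub : (Finset.univ : Finset A) ⊆ (F i).erase x ∪ (Fc.erase i).biUnion F := by
    intro a _
    obtain ⟨k, hk, hak⟩ := hcov a
    rcases eq_or_ne k i with rfl | hki
    · rcases eq_or_ne a x with rfl | hax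
      · exact Finset.mem_union_right _
          (Finset.mem_biUnion.2 ⟨j, Finset.mem_erase.2 ⟨hij.symm, hj⟩, hxj⟩)
      · exact Finset.mem_union_left _ (Finset.mem_erase.2 ⟨hax, hak⟩)
    · exact Finset.mem_union_right _ (Finset.mem_biUnion.2 ⟨k, Finset.mem_erase.2 ⟨hki, hk⟩, hak⟩)
  have h1 := Finset.card_le_card hsub
  have h2 := Finset.card_union_le ((F i).erase x) ((Fc.erase i).biUnion F)
  have h3 := Finset.card_biUnion_le (s := Fc.erase i) (t := F)
  have h4 : ∑ j ∈ Fc.erase i, (F j).card = 3 * (Fc.erase i).card := by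
    rw [Finset.sum_congr rfl (fun j _ => hF j), Finset.sum_const, smul_eq_mul, mul_comm]
  have h5 : ((F i).erase x).card = 2 := by rw [Finset.card_erase_of_mem hxi, hF i]
  have h6 : (Fc.erase i).card = n - 1 := by rw [Finset.card_erase_of_mem hi, hcard]
  have hn1 : 1 ≤ n := by
    have := Finset.card_pos.2 ⟨i, hi⟩; omega
  rw [Finset.card_univ, hA] at h1
  omega

/-- The key forward induction. -/
lemma xc_key (hA : Fintype.card A = 3 * n) (hnm : n ≤ m) :
    ∀ {u t : XCVtx' A m} (p : (xcGraph' F).Walk u t) (s : St (XCVtx' A m) ℕ),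
    t = .start →
    s.add = 0 →
    s.curr + (s.visited.erase .start).card = 3 * n + m →
    u ∈ s.visited →
    (∀ a : A, XCVtx'.elem a ∈ s.visited → ∃ j, a ∈ F j ∧ XCVtx'.setv j ∈ s.visited) →
    ((∃ Fc : Finset (Fin m), Fc.card ≤ n ∧ ∀ a : A, ∃ j ∈ Fc, a ∈ F j) ∨
      (∃ a : A, XCVtx'.elem a ∉ s.visited) ∨ (∃ a : A, u = .elem a)) →
    (scanWalk (xcWE' A n m) (xcWV' A m) p s).add = 0 →
    (∀ a : A, XCVtx'.elem a ∈ (scanWalk (xcWE' A n m) (xcWV' A m) p s).visited) →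
    ∃ Fc : Finset (Fin m), Fc.card ≤ n ∧ ∀ a : A, ∃ j ∈ Fc, a ∈ F j := by
  intro u t p
  induction p with
  | nil =>
    intro s ht h0 hinv hu hW hD hadd hall
    subst ht
    rw [scanWalk_nil] at hall
    rcases hD with h1 | ⟨a, ha⟩ | ⟨a, ha⟩
    · exact h1
    · exact absurd (hall a) ha
    · exact absurd ha (by simp)
  | @cons u v _ h p ih =>
    intro s ht h0 hinv hu hW hD hadd hall
    rw [scanWalk_cons] at hadd hall
    have hs2add : (visitVtx (xcWV' A m) v (crossEdge (xcWE' A n m) s(u, v) s)).add = 0 :=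
      Nat.le_antisymm (hadd ▸ add_le_scanWalk _ _) (Nat.zero_le _)
    obtain ⟨hwE, hwV⟩ := step_facts h0 hs2add
    rw [crossEdge_of_le hwE] at hadd hall hs2add
    -- extraction helper: if `u` is an element vertex and all elements are
    -- already visited, we can extract a cover.
    have hext : (∃ a : A, u = .elem a) → (∀ a : A, XCVtx'.elem a ∈ s.visited) →
        ∃ Fc : Finset (Fin m), Fc.card ≤ n ∧ ∀ a : A, ∃ j ∈ Fc, a ∈ F j := by
      rintro ⟨a, rfl⟩ hall'
      obtain ⟨j, rfl, hjF⟩ := xc_adj_elem h.symm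
      have hw : xcWE' A n m s(XCVtx'.elem a, XCVtx'.setv j) = m - n := rfl
      rw [hw] at hwE
      exact xc_extract hA hnm hwE hinv hall' hW
    by_cases hv : v ∈ s.visited
    · rw [visitVtx_of_mem hv] at hadd hall
      refine ih s ht h0 hinv hv hW ?_ hadd hall
      rcases hD with h1 | h2 | h3
      · exact Or.inl h1
      · exact Or.inr (Or.inl h2)
      · by_cases hallv : ∀ a : A, XCVtx'.elem a ∈ s.visited
        · exact Or.inl (hext h3 hallv)
        · push_neg at hallv
          exact Or.inr (Or.inl hallv)
    · rw [visitVtx_of_new hv (hwV hv)] at hadd hall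
      set s2 : St (XCVtx' A m) ℕ :=
        ⟨insert v s.visited, s.curr - xcWV' A m v, s.add⟩ with hs2
      have h0' : s2.add = 0 := h0
      have hinv' : s2.curr + (s2.visited.erase .start).card = 3 * n + m := by
        rcases eq_or_ne v .start with rfl | hvs
        · have : xcWV' A m XCVtx'.start = 0 := rfl
          rw [hs2]
          simp only [this, Nat.sub_zero]
          have : (insert XCVtx'.start s.visited).erase XCVtx'.start
              = s.visited.erase XCVtx'.start := by
            exact Finset.erase_insert_eq_erase _ _
          rw [this]; exact hinv
        · have hw1 : xcWV' A m v = 1 := by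
            rcases v with a | j | _
            · rfl
            · rfl
            · exact absurd rfl hvs
          have h1 : (insert v s.visited).erase XCVtx'.start
              = insert v (s.visited.erase XCVtx'.start) :=
            Finset.erase_insert_of_ne hvs
          have h2 : v ∉ s.visited.erase XCVtx'.start := fun hmem =>
            hv (Finset.mem_of_mem_erase hmem)
          have h3 := hwV hv
          rw [hs2]
          simp only [h1, Finset.card_insert_of_notMem h2, hw1]
          rw [hw1] at h3
          omega
      have hW' : ∀ a : A, XCVtx'.elem a ∈ s2.visited →
          ∃ j, a ∈ F j ∧ XCVtx'.setv j ∈ s2.visited := by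
        intro a ha
        rcases Finset.mem_insert.1 ha with hva | ha
        · obtain ⟨j, rfl, hjF⟩ := xc_adj_elem (hva ▸ h)
          exact ⟨j, hjF, Finset.mem_insert_of_mem hu⟩
        · obtain ⟨j, hjF, hjv⟩ := hW a ha
          exact ⟨j, hjF, Finset.mem_insert_of_mem hjv⟩
      have hD' : (∃ Fc : Finset (Fin m), Fc.card ≤ n ∧ ∀ a : A, ∃ j ∈ Fc, a ∈ F j) ∨
          (∃ a : A, XCVtx'.elem a ∉ s2.visited) ∨ (∃ a : A, v = .elem a) := by
        rcases hD with h1 | ⟨a0, ha0⟩ | h3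
        · exact Or.inl h1
        · rcases eq_or_ne v (XCVtx'.elem a0) with rfl | hne
          · exact Or.inr (Or.inr ⟨a0, rfl⟩)
          · exact Or.inr (Or.inl ⟨a0, by
              simp only [hs2, Finset.mem_insert]
              rintro (h' | h')
              · exact hne h'.symm
              · exact ha0 h'⟩)
        · by_cases hallv : ∀ a : A, XCVtx'.elem a ∈ s.visited
          · exact Or.inl (hext h3 hallv)
          · push_neg at hallv
            obtain ⟨a0, ha0⟩ := hallv
            obtain ⟨a, rfl⟩ := h3
            obtain ⟨j, rfl, -⟩ := xc_adj_elem (F := F) h.symm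
            exact Or.inr (Or.inl ⟨a0, by
              simp only [hs2, Finset.mem_insert]
              rintro (h' | h')
              · exact absurd h' (by simp)
              · exact ha0 h'⟩)
      exact ih s2 ht h0' hinv' (Finset.mem_insert_self _ _) hW' hD' hadd hall

/-- Scan of one cover gadget. -/
lemma covGadget {j : Fin m} {a b c : A} (ha : a ∈ F j) (hb : b ∈ F j) (hc : c ∈ F j)
    (hab : a ≠ b) (hac : a ≠ c) (hbc : b ≠ c)
    {Vis : Finset (XCVtx' A m)} {C : ℕ}
    (hsv : XCVtx'.setv j ∉ Vis) (hea : XCVtx'.elem a ∉ Vis) (heb : XCVtx'.elem b ∉ Vis)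
    (hec : XCVtx'.elem c ∉ Vis) (hst : XCVtx'.start ∈ Vis) (hC : m - n + 4 ≤ C) :
    ∃ p : (xcGraph' F).Walk .start .start,
      scanWalk (xcWE' A n m) (xcWV' A m) p ⟨Vis, C, 0⟩ =
        ⟨insert (XCVtx'.elem c) (insert (XCVtx'.elem b) (insert (XCVtx'.elem a)
          (insert (XCVtx'.setv j) Vis))), C - 4, 0⟩ ∧
      XCVtx'.setv j ∈ p.support ∧ XCVtx'.elem a ∈ p.support ∧
      XCVtx'.elem b ∈ p.support ∧ XCVtx'.elem c ∈ p.support := by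
  refine ⟨.cons (xc_adj_start_setv j) (.cons (xc_adj_setv_elem ha)
    (.cons (xc_adj_setv_elem ha).symm (.cons (xc_adj_setv_elem hb)
    (.cons (xc_adj_setv_elem hb).symm (.cons (xc_adj_setv_elem hc)
    (.cons (xc_adj_setv_elem hc).symm (.cons (xc_adj_start_setv j).symm .nil))))))),
    ?_, ?_, ?_, ?_, ?_⟩
  · have e1 : crossEdge (xcWE' A n m) s(XCVtx'.start, XCVtx'.setv j)
        (⟨Vis, C, 0⟩ : St (XCVtx' A m) ℕ) = ⟨Vis, C, 0⟩ := by
      apply crossEdge_of_le; show (0:ℕ) ≤ C; omega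
    have v1 : visitVtx (xcWV' A m) (XCVtx'.setv j) (⟨Vis, C, 0⟩ : St (XCVtx' A m) ℕ) =
        ⟨insert (XCVtx'.setv j) Vis, C - 1, 0⟩ :=
      visitVtx_of_new hsv (by show (1:ℕ) ≤ C; omega)
    have e2 : crossEdge (xcWE' A n m) s(XCVtx'.setv j, XCVtx'.elem a)
        (⟨insert (XCVtx'.setv j) Vis, C - 1, 0⟩ : St (XCVtx' A m) ℕ) =
        ⟨insert (XCVtx'.setv j) Vis, C - 1, 0⟩ := by
      apply crossEdge_of_le; show m - n ≤ C - 1; omega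
    have v2 : visitVtx (xcWV' A m) (XCVtx'.elem a)
        (⟨insert (XCVtx'.setv j) Vis, C - 1, 0⟩ : St (XCVtx' A m) ℕ) =
        ⟨insert (XCVtx'.elem a) (insert (XCVtx'.setv j) Vis), C - 1 - 1, 0⟩ :=
      visitVtx_of_new (by simp [hea]) (by show (1:ℕ) ≤ C - 1; omega)
    have e3 : crossEdge (xcWE' A n m) s(XCVtx'.elem a, XCVtx'.setv j)
        (⟨insert (XCVtx'.elem a) (insert (XCVtx'.setv j) Vis), C - 1 - 1, 0⟩ :
          St (XCVtx' A m) ℕ) =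
        ⟨insert (XCVtx'.elem a) (insert (XCVtx'.setv j) Vis), C - 1 - 1, 0⟩ := by
      apply crossEdge_of_le; show m - n ≤ C - 1 - 1; omega
    have v3 : visitVtx (xcWV' A m) (XCVtx'.setv j)
        (⟨insert (XCVtx'.elem a) (insert (XCVtx'.setv j) Vis), C - 1 - 1, 0⟩ :
          St (XCVtx' A m) ℕ) =
        ⟨insert (XCVtx'.elem a) (insert (XCVtx'.setv j) Vis), C - 1 - 1, 0⟩ :=
      visitVtx_of_mem (by simp)
    have e4 : crossEdge (xcWE' A n m) s(XCVtx'.setv j, XCVtx'.elem b)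
        (⟨insert (XCVtx'.elem a) (insert (XCVtx'.setv j) Vis), C - 1 - 1, 0⟩ :
          St (XCVtx' A m) ℕ) =
        ⟨insert (XCVtx'.elem a) (insert (XCVtx'.setv j) Vis), C - 1 - 1, 0⟩ := by
      apply crossEdge_of_le; show m - n ≤ C - 1 - 1; omega
    have v4 : visitVtx (xcWV' A m) (XCVtx'.elem b)
        (⟨insert (XCVtx'.elem a) (insert (XCVtx'.setv j) Vis), C - 1 - 1, 0⟩ :
          St (XCVtx' A m) ℕ) =
        ⟨insert (XCVtx'.elem b) (insert (XCVtx'.elem a) (insert (XCVtx'.setv j) Vis)),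
          C - 1 - 1 - 1, 0⟩ :=
      visitVtx_of_new (by simp [heb, Ne.symm hab]) (by show (1:ℕ) ≤ C - 1 - 1; omega)
    have e5 : crossEdge (xcWE' A n m) s(XCVtx'.elem b, XCVtx'.setv j)
        (⟨insert (XCVtx'.elem b) (insert (XCVtx'.elem a) (insert (XCVtx'.setv j) Vis)),
          C - 1 - 1 - 1, 0⟩ : St (XCVtx' A m) ℕ) =
        ⟨insert (XCVtx'.elem b) (insert (XCVtx'.elem a) (insert (XCVtx'.setv j) Vis)),
          C - 1 - 1 - 1, 0⟩ := by
      apply crossEdge_of_le; show m - n ≤ C - 1 - 1 - 1; omega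
    have v5 : visitVtx (xcWV' A m) (XCVtx'.setv j)
        (⟨insert (XCVtx'.elem b) (insert (XCVtx'.elem a) (insert (XCVtx'.setv j) Vis)),
          C - 1 - 1 - 1, 0⟩ : St (XCVtx' A m) ℕ) =
        ⟨insert (XCVtx'.elem b) (insert (XCVtx'.elem a) (insert (XCVtx'.setv j) Vis)),
          C - 1 - 1 - 1, 0⟩ :=
      visitVtx_of_mem (by simp)
    have e6 : crossEdge (xcWE' A n m) s(XCVtx'.setv j, XCVtx'.elem c)
        (⟨insert (XCVtx'.elem b) (insert (XCVtx'.elem a) (insert (XCVtx'.setv j) Vis)),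
          C - 1 - 1 - 1, 0⟩ : St (XCVtx' A m) ℕ) =
        ⟨insert (XCVtx'.elem b) (insert (XCVtx'.elem a) (insert (XCVtx'.setv j) Vis)),
          C - 1 - 1 - 1, 0⟩ := by
      apply crossEdge_of_le; show m - n ≤ C - 1 - 1 - 1; omega
    have v6 : visitVtx (xcWV' A m) (XCVtx'.elem c)
        (⟨insert (XCVtx'.elem b) (insert (XCVtx'.elem a) (insert (XCVtx'.setv j) Vis)),
          C - 1 - 1 - 1, 0⟩ : St (XCVtx' A m) ℕ) =
        ⟨insert (XCVtx'.elem c) (insert (XCVtx'.elem b) (insert (XCVtx'.elem a)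
          (insert (XCVtx'.setv j) Vis))), C - 1 - 1 - 1 - 1, 0⟩ :=
      visitVtx_of_new (by simp [hec, Ne.symm hac, Ne.symm hbc])
        (by show (1:ℕ) ≤ C - 1 - 1 - 1; omega)
    have e7 : crossEdge (xcWE' A n m) s(XCVtx'.elem c, XCVtx'.setv j)
        (⟨insert (XCVtx'.elem c) (insert (XCVtx'.elem b) (insert (XCVtx'.elem a)
          (insert (XCVtx'.setv j) Vis))), C - 1 - 1 - 1 - 1, 0⟩ : St (XCVtx' A m) ℕ) =
        ⟨insert (XCVtx'.elem c) (insert (XCVtx'.elem b) (insert (XCVtx'.elem a)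
          (insert (XCVtx'.setv j) Vis))), C - 1 - 1 - 1 - 1, 0⟩ := by
      apply crossEdge_of_le; show m - n ≤ C - 1 - 1 - 1 - 1; omega
    have v7 : visitVtx (xcWV' A m) (XCVtx'.setv j)
        (⟨insert (XCVtx'.elem c) (insert (XCVtx'.elem b) (insert (XCVtx'.elem a)
          (insert (XCVtx'.setv j) Vis))), C - 1 - 1 - 1 - 1, 0⟩ : St (XCVtx' A m) ℕ) =
        ⟨insert (XCVtx'.elem c) (insert (XCVtx'.elem b) (insert (XCVtx'.elem a)
          (insert (XCVtx'.setv j) Vis))), C - 1 - 1 - 1 - 1, 0⟩ :=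
      visitVtx_of_mem (by simp)
    have e8 : crossEdge (xcWE' A n m) s(XCVtx'.setv j, XCVtx'.start)
        (⟨insert (XCVtx'.elem c) (insert (XCVtx'.elem b) (insert (XCVtx'.elem a)
          (insert (XCVtx'.setv j) Vis))), C - 1 - 1 - 1 - 1, 0⟩ : St (XCVtx' A m) ℕ) =
        ⟨insert (XCVtx'.elem c) (insert (XCVtx'.elem b) (insert (XCVtx'.elem a)
          (insert (XCVtx'.setv j) Vis))), C - 1 - 1 - 1 - 1, 0⟩ := by
      apply crossEdge_of_le; show (0:ℕ) ≤ C - 1 - 1 - 1 - 1; omega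
    have v8 : visitVtx (xcWV' A m) XCVtx'.start
        (⟨insert (XCVtx'.elem c) (insert (XCVtx'.elem b) (insert (XCVtx'.elem a)
          (insert (XCVtx'.setv j) Vis))), C - 1 - 1 - 1 - 1, 0⟩ : St (XCVtx' A m) ℕ) =
        ⟨insert (XCVtx'.elem c) (insert (XCVtx'.elem b) (insert (XCVtx'.elem a)
          (insert (XCVtx'.setv j) Vis))), C - 1 - 1 - 1 - 1, 0⟩ :=
      visitVtx_of_mem (by simp [hst])
    simp only [scanWalk_cons, scanWalk_nil]
    rw [e1, v1, e2, v2, e3, v3, e4, v4, e5, v5, e6, v6, e7, v7, e8, v8]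
    have : C - 1 - 1 - 1 - 1 = C - 4 := by omega
    rw [this]
  · simp [SimpleGraph.Walk.support_cons]
  · simp [SimpleGraph.Walk.support_cons]
  · simp [SimpleGraph.Walk.support_cons]
  · simp [SimpleGraph.Walk.support_cons]

/-- The cover phase of the constructed walk. -/
lemma covPhase (hF3 : ∀ j, (F j).card = 3) :
    ∀ (L : List (Fin m)) (Vis : Finset (XCVtx' A m)) (C : ℕ),
    L.Nodup →
    (∀ i ∈ L, ∀ j ∈ L, i ≠ j → Disjoint (F i) (F j)) →
    (∀ j ∈ L, XCVtx'.setv j ∉ Vis) →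
    (∀ j ∈ L, ∀ a ∈ F j, XCVtx'.elem a ∉ Vis) →
    XCVtx'.start ∈ Vis →
    m - n + 4 * L.length ≤ C →
    ∃ (p : (xcGraph' F).Walk .start .start) (Vis' : Finset (XCVtx' A m)),
      scanWalk (xcWE' A n m) (xcWV' A m) p ⟨Vis, C, 0⟩ = ⟨Vis', C - 4 * L.length, 0⟩ ∧
      Vis ⊆ Vis' ∧
      (∀ v ∈ Vis', v ∈ Vis ∨ (∃ j ∈ L, v = XCVtx'.setv j) ∨
        (∃ j ∈ L, ∃ a ∈ F j, v = XCVtx'.elem a)) ∧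
      (∀ j ∈ L, XCVtx'.setv j ∈ p.support) ∧
      (∀ j ∈ L, ∀ a ∈ F j, XCVtx'.elem a ∈ p.support) := by
  intro L
  induction L with
  | nil =>
    intro Vis C _ _ _ _ hst hC
    exact ⟨.nil, Vis, by simp [scanWalk_nil], le_refl _, fun v hv => Or.inl hv,
      by simp, by simp⟩
  | cons j L ih =>
    intro Vis C hnd hdisj hsv hel hst hC
    obtain ⟨a, b, c, hab, hac, hbc, hFj⟩ := Finset.card_eq_three.1 (hF3 j)
    have hjL : j ∉ L := (List.nodup_cons.1 hnd).1
    have ha : a ∈ F j := by rw [hFj]; simp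
    have hb : b ∈ F j := by rw [hFj]; simp
    have hc : c ∈ F j := by rw [hFj]; simp
    have hjmem : j ∈ j :: L := List.mem_cons_self
    obtain ⟨g, hg, hgs1, hgs2, hgs3, hgs4⟩ := covGadget (n := n) (F := F) (Vis := Vis) (C := C) ha hb hc hab hac hbc
      (hsv j hjmem) (hel j hjmem a ha) (hel j hjmem b hb) (hel j hjmem c hc) hst
      (by simp only [List.length_cons] at hC; omega)
    set Vis1 := insert (XCVtx'.elem c) (insert (XCVtx'.elem b) (insert (XCVtx'.elem a)
      (insert (XCVtx'.setv j) Vis))) with hVis1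
    have hVsub : Vis ⊆ Vis1 := by
      intro v hv
      simp only [hVis1, Finset.mem_insert]
      tauto
    obtain ⟨p, Vis', hp, hsub, hchar, hps1, hps2⟩ := ih Vis1 (C - 4)
      (List.nodup_cons.1 hnd).2
      (fun i hi k hk hik => hdisj i (List.mem_cons_of_mem _ hi) k (List.mem_cons_of_mem _ hk) hik)
      (fun i hi => by
        simp only [hVis1, Finset.mem_insert]
        push_neg
        refine ⟨by simp, by simp, by simp, ?_, hsv i (List.mem_cons_of_mem _ hi)⟩
        simp only [ne_eq, XCVtx'.setv.injEq]
        rintro rfl; exact hjL hi)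
      (fun i hi x hx => by
        have hix : i ≠ j := by rintro rfl; exact hjL hi
        have hdx := hdisj i (List.mem_cons_of_mem _ hi) j hjmem hix
        have hxj : x ∉ F j := fun hxj => (Finset.disjoint_left.1 hdx hx) hxj
        rw [hFj] at hxj
        simp only [Finset.mem_insert, Finset.mem_singleton] at hxj
        push_neg at hxj
        simp only [hVis1, Finset.mem_insert]
        push_neg
        exact ⟨by simp [hxj.2.2], by simp [hxj.2.1], by simp [hxj.1], by simp,
          hel i (List.mem_cons_of_mem _ hi) x hx⟩)
      (hVsub hst)
      (by simp only [List.length_cons] at hC ⊢; omega)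
    refine ⟨g.append p, Vis', ?_, ?_, ?_, ?_, ?_⟩
    · rw [scanWalk_append, hg, hp]
      have : C - 4 - 4 * L.length = C - 4 * (j :: L).length := by
        simp only [List.length_cons]; omega
      rw [this]
    · exact hVsub.trans hsub
    · intro v hv
      rcases hchar v hv with hv1 | hv2 | hv3
      · simp only [hVis1, Finset.mem_insert] at hv1
        rcases hv1 with rfl | rfl | rfl | rfl | hv1
        · exact Or.inr (Or.inr ⟨j, hjmem, c, hc, rfl⟩)
        · exact Or.inr (Or.inr ⟨j, hjmem, b, hb, rfl⟩)
        · exact Or.inr (Or.inr ⟨j, hjmem, a, ha, rfl⟩)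
        · exact Or.inr (Or.inl ⟨j, hjmem, rfl⟩)
        · exact Or.inl hv1
      · obtain ⟨k, hk, rfl⟩ := hv2
        exact Or.inr (Or.inl ⟨k, List.mem_cons_of_mem _ hk, rfl⟩)
      · obtain ⟨k, hk, x, hx, rfl⟩ := hv3
        exact Or.inr (Or.inr ⟨k, List.mem_cons_of_mem _ hk, x, hx, rfl⟩)
    · intro i hi
      rw [SimpleGraph.Walk.mem_support_append_iff]
      rcases List.mem_cons.1 hi with rfl | hi
      · exact Or.inl hgs1
      · exact Or.inr (hps1 i hi)
    · intro i hi x hx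
      rw [SimpleGraph.Walk.mem_support_append_iff]
      rcases List.mem_cons.1 hi with rfl | hi
      · rw [hFj] at hx
        simp only [Finset.mem_insert, Finset.mem_singleton] at hx
        rcases hx with rfl | rfl | rfl
        · exact Or.inl hgs2
        · exact Or.inl hgs3
        · exact Or.inl hgs4
      · exact Or.inr (hps2 i hi x hx)

/-- The tail phase visiting the non-cover set vertices. -/
lemma tailPhase :
    ∀ (L : List (Fin m)) (Vis : Finset (XCVtx' A m)) (C : ℕ),
    L.Nodup →
    (∀ j ∈ L, XCVtx'.setv j ∉ Vis) →
    XCVtx'.start ∈ Vis →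
    L.length ≤ C →
    ∃ p : (xcGraph' F).Walk .start .start,
      (scanWalk (xcWE' A n m) (xcWV' A m) p ⟨Vis, C, 0⟩).add = 0 ∧
      ∀ j ∈ L, XCVtx'.setv j ∈ p.support := by
  intro L
  induction L with
  | nil =>
    intro Vis C _ _ _ _
    exact ⟨.nil, by simp [scanWalk_nil], by simp⟩
  | cons j L ih =>
    intro Vis C hnd hsv hst hC
    simp only [List.length_cons] at hC
    set g : (xcGraph' F).Walk .start .start :=
      .cons (xc_adj_start_setv j) (.cons (xc_adj_start_setv j).symm .nil) with hgdef
    have hscan : scanWalk (xcWE' A n m) (xcWV' A m) g ⟨Vis, C, 0⟩ =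
        ⟨insert (XCVtx'.setv j) Vis, C - 1, 0⟩ := by
      have e1 : crossEdge (xcWE' A n m) s(XCVtx'.start, XCVtx'.setv j)
          (⟨Vis, C, 0⟩ : St (XCVtx' A m) ℕ) = ⟨Vis, C, 0⟩ := by
        apply crossEdge_of_le; show (0:ℕ) ≤ C; omega
      have v1 : visitVtx (xcWV' A m) (XCVtx'.setv j) (⟨Vis, C, 0⟩ : St (XCVtx' A m) ℕ) =
          ⟨insert (XCVtx'.setv j) Vis, C - 1, 0⟩ :=
        visitVtx_of_new (hsv j (List.mem_cons_self)) (by show (1:ℕ) ≤ C; omega)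
      have e2 : crossEdge (xcWE' A n m) s(XCVtx'.setv j, XCVtx'.start)
          (⟨insert (XCVtx'.setv j) Vis, C - 1, 0⟩ : St (XCVtx' A m) ℕ) =
          ⟨insert (XCVtx'.setv j) Vis, C - 1, 0⟩ := by
        apply crossEdge_of_le; show (0:ℕ) ≤ C - 1; omega
      have v2 : visitVtx (xcWV' A m) XCVtx'.start
          (⟨insert (XCVtx'.setv j) Vis, C - 1, 0⟩ : St (XCVtx' A m) ℕ) =
          ⟨insert (XCVtx'.setv j) Vis, C - 1, 0⟩ :=
        visitVtx_of_mem (by simp [hst])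
      rw [hgdef]
      simp only [scanWalk_cons, scanWalk_nil]
      rw [e1, v1, e2, v2]
    obtain ⟨p, hp, hps⟩ := ih (insert (XCVtx'.setv j) Vis) (C - 1)
      (List.nodup_cons.1 hnd).2
      (fun i hi => by
        simp only [Finset.mem_insert]
        push_neg
        refine ⟨?_, hsv i (List.mem_cons_of_mem _ hi)⟩
        simp only [ne_eq, XCVtx'.setv.injEq]
        rintro rfl; exact (List.nodup_cons.1 hnd).1 hi)
      (Finset.mem_insert_of_mem hst)
      (by omega)
    refine ⟨g.append p, ?_, ?_⟩
    · rw [scanWalk_append, hscan]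
      exact hp
    · intro i hi
      rw [SimpleGraph.Walk.mem_support_append_iff]
      rcases List.mem_cons.1 hi with rfl | hi
      · exact Or.inl (by simp [hgdef, SimpleGraph.Walk.support_cons])
      · exact Or.inr (hps i hi)

end XC

end Deploy

/-- with `|X| = 3n` and `F` a family of `m ≥ n` three-element
subsets of `X`, the graph `G'(X, F)` admits a closed covering walk from `v_s`
(returning to `v_s` at the end) with agent count exactly `N = 3n + m` if and
only if `F` contains an exact 3-cover of `X`. -/
theorem xc_reduction_return {A : Type*} [Fintype A] [DecidableEq A]
    (n m : ℕ) (hnm : n ≤ m) (hA : Fintype.card A = 3 * n)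
    (F : Fin m → Finset A) (hF : ∀ j, (F j).card = 3) :
    (∃ p : (Deploy.xcGraph' F).Walk .start .start,
      Deploy.IsCovering p ∧
      Deploy.agentCount (Deploy.xcWE' A n m) (Deploy.xcWV' A m) p = 3 * n + m) ↔
    (∃ Fc : Finset (Fin m), Fc.card = n ∧
      (∀ i ∈ Fc, ∀ j ∈ Fc, i ≠ j → Disjoint (F i) (F j)) ∧
      ∀ a : A, ∃ j ∈ Fc, a ∈ F j) := by
  classical
  have hsum : ∑ v, Deploy.xcWV' A m v = 3 * n + m := by rw [Deploy.sum_xcWV', hA]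
  have hv0 : Deploy.visitVtx (Deploy.xcWV' A m) Deploy.XCVtx'.start
      (⟨∅, 3 * n + m, 0⟩ : Deploy.St (Deploy.XCVtx' A m) ℕ) =
      ⟨{Deploy.XCVtx'.start}, 3 * n + m, 0⟩ :=
    Deploy.visitVtx_of_new (by simp) (by show (0:ℕ) ≤ 3 * n + m; omega)
  constructor
  · rintro ⟨p, hcov, hcount⟩
    rcases Nat.eq_zero_or_pos n with rfl | hn
    · refine ⟨∅, by simp, by simp, fun a => ?_⟩
      have hpos : 0 < Fintype.card A := Fintype.card_pos_iff.mpr ⟨a⟩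
      omega
    · rw [Deploy.agentCount, hsum] at hcount
      have hadd0 : (Deploy.scanWalk (Deploy.xcWE' A n m) (Deploy.xcWV' A m) p
          (Deploy.visitVtx (Deploy.xcWV' A m) Deploy.XCVtx'.start ⟨∅, 3 * n + m, 0⟩)).add = 0 := by
        omega
      rw [hv0] at hadd0
      obtain ⟨a0⟩ : Nonempty A := Fintype.card_pos_iff.1 (by omega)
      obtain ⟨Fc, hle, hcov'⟩ := Deploy.xc_key hA hnm p ⟨{Deploy.XCVtx'.start}, 3 * n + m, 0⟩ rfl rfl
        (by simp)
        (by simp)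
        (fun a ha => absurd ha (by simp))
        (Or.inr (Or.inl ⟨a0, by simp⟩))
        hadd0
        (fun a => by
          rcases Deploy.support_mem_visited p _ (hcov (.elem a)) with h | h
          · exact h
          · exact absurd h (by simp))
      obtain ⟨hcard, hdisj⟩ := Deploy.xc_count hA hF hle hcov'
      exact ⟨Fc, hcard, hdisj, hcov'⟩
  · rintro ⟨Fc, hcard, hdisj, hcov⟩
    obtain ⟨p1, Vis', hp1, hsub, hchar, hps1, hps2⟩ :=
      Deploy.covPhase (n := n) (F := F) hF Fc.toList {Deploy.XCVtx'.start} (3 * n + m)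
        Fc.nodup_toList
        (fun i hi j hj hij =>
          hdisj i (Finset.mem_toList.1 hi) j (Finset.mem_toList.1 hj) hij)
        (fun j _ => by simp)
        (fun j _ a _ => by simp)
        (by simp)
        (by rw [Finset.length_toList, hcard]; omega)
    have hlen1 : Fc.toList.length = n := by rw [Finset.length_toList, hcard]
    obtain ⟨p2, hp2, hps3⟩ :=
      Deploy.tailPhase (n := n) (F := F) (Finset.univ \ Fc).toList Vis'
        (3 * n + m - 4 * Fc.toList.length)
        (Finset.nodup_toList _)
        (fun i hi hmem => by
          have hiF : i ∉ Fc := (Finset.mem_sdiff.1 (Finset.mem_toList.1 hi)).2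
          rcases hchar _ hmem with h | ⟨k, hk, hik⟩ | ⟨k, _, x, _, hik⟩
          · exact absurd h (by simp)
          · rw [Deploy.XCVtx'.setv.injEq] at hik
            exact hiF (hik ▸ Finset.mem_toList.1 hk)
          · simp at hik)
        (hsub (by simp))
        (by
          rw [Finset.length_toList, Finset.card_sdiff_of_subset (Finset.subset_univ _),
            Finset.card_univ, Fintype.card_fin, hcard, hlen1]
          omega)
    refine ⟨p1.append p2, ?_, ?_⟩
    · intro v
      rw [SimpleGraph.Walk.mem_support_append_iff]
      rcases v with a | j | _
      · obtain ⟨j, hj, haj⟩ := hcov a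
        exact Or.inl (hps2 j (Finset.mem_toList.2 hj) a haj)
      · by_cases hjF : j ∈ Fc
        · exact Or.inl (hps1 j (Finset.mem_toList.2 hjF))
        · exact Or.inr (hps3 j (Finset.mem_toList.2 (Finset.mem_sdiff.2
            ⟨Finset.mem_univ _, hjF⟩)))
      · exact Or.inl p1.start_mem_support
    · rw [Deploy.agentCount, hsum, hv0, Deploy.scanWalk_append, hp1, hp2]
      omega
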